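/- Let X be a Banach space and M, N linear subspaces with dim M = dim N = n. If δ(N,M) < 1, then δ(M,N) ≤ 2^{n-1} n δ(N,M) / (1 − δ(N,M))^n, where δ(M,N) := sup_{u ∈ M, ‖u‖=1} dist(u, N) (and δ := 0 if M = {0}). -/

import Mathlib

/-- The (one-sided) gap `δ(M,N) := sup {dist(u,N) : u ∈ M, ‖u‖ = 1}` between subspaces
of a normed space, with the convention `δ(M,N) = 0` if `M = {0}` (empty sup). -/
noncomputable def gapDelta {X : Type*} [NormedAddCommGroup X] [NormedSpace ℂ X]
    (M N : Submodule ℂ X) : ℝ :=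
  sSup ((fun u => Metric.infDist u (N : Set X)) '' {u : X | u ∈ M ∧ ‖u‖ = 1})


set_option maxHeartbeats 1000000

open Metric Module Submodule

namespace GapAux

variable {X : Type*} [NormedAddCommGroup X] [NormedSpace ℂ X]




lemma mem_one {u : X} {M N : Submodule ℂ X} (hu : u ∈ M) (h1 : ‖u‖ = 1) :
    Metric.infDist u (N : Set X) ≤ 1 := by
  have := infDist_le_dist_of_mem (x := u) (show (0:X) ∈ (N : Set X) from N.zero_mem)
  simpa [dist_eq_norm, h1] using this

lemma gapDelta_nonneg (M N : Submodule ℂ X) : 0 ≤ gapDelta M N :=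
  Real.sSup_nonneg fun x hx => by
    obtain ⟨u, -, rfl⟩ := hx; exact infDist_nonneg

lemma gapDelta_le_one (M N : Submodule ℂ X) : gapDelta M N ≤ 1 :=
  Real.sSup_le (fun x hx => by obtain ⟨u, ⟨hu, h1⟩, rfl⟩ := hx; exact mem_one hu h1)
    zero_le_one

lemma gapDelta_bddAbove (M N : Submodule ℂ X) :
    BddAbove ((fun u => Metric.infDist u (N : Set X)) '' {u : X | u ∈ M ∧ ‖u‖ = 1}) :=
  ⟨1, fun x hx => by obtain ⟨u, ⟨hu, h1⟩, rfl⟩ := hx; exact mem_one hu h1⟩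

lemma gapDelta_le {M N : Submodule ℂ X} {c : ℝ} (hc : 0 ≤ c)
    (h : ∀ u ∈ M, ‖u‖ = 1 → Metric.infDist u (N : Set X) ≤ c) : gapDelta M N ≤ c :=
  Real.sSup_le (fun x hx => by obtain ⟨u, ⟨hu, h1⟩, rfl⟩ := hx; exact h u hu h1) hc

lemma le_gapDelta {M N : Submodule ℂ X} {u : X} (hu : u ∈ M) (h1 : ‖u‖ = 1) :
    Metric.infDist u (N : Set X) ≤ gapDelta M N :=
  le_csSup (gapDelta_bddAbove M N) ⟨u, ⟨hu, h1⟩, rfl⟩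

lemma infDist_le_gapDelta_mul {M N : Submodule ℂ X} {x : X} (hx : x ∈ M) :
    Metric.infDist x (N : Set X) ≤ gapDelta M N * ‖x‖ := by
  rcases eq_or_ne x 0 with rfl | hx0
  · have h0 := infDist_le_dist_of_mem (x := (0:X)) (show (0:X) ∈ (N : Set X) from N.zero_mem)
    simpa using h0
  · have hnx : (0:ℝ) < ‖x‖ := norm_pos_iff.mpr hx0
    set c : ℂ := (‖x‖ : ℂ)⁻¹ with hc
    have hc0 : c ≠ 0 := by
      simp [hc, Complex.ofReal_ne_zero, hnx.ne']
    set y := c • x with hy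
    have hyM : y ∈ M := M.smul_mem _ hx
    have hy1 : ‖y‖ = 1 := by
      rw [hy, norm_smul, hc, norm_inv, Complex.norm_real, Real.norm_eq_abs,
        abs_of_pos hnx, inv_mul_cancel₀ hnx.ne']
    have hkey : Metric.infDist y (N : Set X) ≤ gapDelta M N := le_gapDelta hyM hy1
    -- infDist x N = infDist ((‖x‖:ℂ) • y) N ≤ ‖x‖ * infDist y N
    have hxy : x = (‖x‖ : ℂ) • y := by
      rw [hy, hc, smul_smul, mul_inv_cancel₀ (by simpa [Complex.ofReal_ne_zero] using hnx.ne'),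
        one_smul]
    have hscale : Metric.infDist x (N : Set X) ≤ ‖x‖ * Metric.infDist y (N : Set X) := by
      refine le_of_forall_pos_le_add fun ε hε => ?_
      have hne : (N : Set X).Nonempty := ⟨0, N.zero_mem⟩
      obtain ⟨m, hmN, hm⟩ := (infDist_lt_iff hne).mp
        (show Metric.infDist y (N : Set X) < Metric.infDist y (N : Set X) + ε / ‖x‖ from
          lt_add_of_pos_right _ (by positivity))
      have hmem : ((‖x‖ : ℂ) • m) ∈ (N : Set X) := N.smul_mem _ hmN
      have := infDist_le_dist_of_mem (x := x) hmem
      have hdd : dist x ((‖x‖ : ℂ) • m) = ‖x‖ * dist y m := by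
        have h1 : dist x ((‖x‖ : ℂ) • m) = dist ((‖x‖ : ℂ) • y) ((‖x‖ : ℂ) • m) := by
          rw [← hxy]
        rw [h1, dist_eq_norm, dist_eq_norm, ← smul_sub, norm_smul, Complex.norm_real,
          Real.norm_eq_abs, abs_of_pos hnx]
      have hml := hm.le
      calc Metric.infDist x (N : Set X) ≤ dist x ((‖x‖ : ℂ) • m) := this
        _ = ‖x‖ * dist y m := hdd
        _ ≤ ‖x‖ * (Metric.infDist y (N : Set X) + ε / ‖x‖) := by nlinarith
        _ = ‖x‖ * Metric.infDist y (N : Set X) + ε := by field_simp [mul_comm]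
    have hin : 0 ≤ Metric.infDist y (N : Set X) := infDist_nonneg
    calc Metric.infDist x (N : Set X) ≤ ‖x‖ * Metric.infDist y (N : Set X) := hscale
      _ ≤ ‖x‖ * gapDelta M N := by nlinarith
      _ = gapDelta M N * ‖x‖ := mul_comm _ _

lemma gapDelta_of_finrank_zero {M : Submodule ℂ X} [FiniteDimensional ℂ M] (N : Submodule ℂ X)
    (hM : finrank ℂ M = 0) : gapDelta M N = 0 := by
  have hbot : M = ⊥ := Submodule.finrank_eq_zero.mp hM
  have : {u : X | u ∈ M ∧ ‖u‖ = 1} = ∅ := by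
    ext u
    simp only [Set.mem_setOf_eq, Set.mem_empty_iff_false, iff_false, not_and, hbot,
      Submodule.mem_bot]
    rintro rfl
    simp
  rw [gapDelta, this]
  simp [Real.sSup_empty]





/-- Distance to a finite-dimensional subspace is attained. -/
lemma exists_dist_eq_infDist (P : Submodule ℂ X) [FiniteDimensional ℂ P] (x : X) :
    ∃ m ∈ P, dist x m = Metric.infDist x (P : Set X) := by
  set d := Metric.infDist x (P : Set X) with hd
  have hne : (P : Set X).Nonempty := ⟨0, P.zero_mem⟩
  obtain ⟨z, hzP, hz⟩ := (infDist_lt_iff hne).mp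
    (show d < d + 1 from lt_add_of_pos_right _ one_pos)
  set K : Set P := {p : P | dist x (p : X) ≤ d + 1} with hK
  have hKne : K.Nonempty := ⟨⟨z, hzP⟩, hz.le⟩
  have hKcl : IsClosed K :=
    isClosed_le (continuous_const.dist continuous_subtype_val) continuous_const
  have hKbd : Bornology.IsBounded K := by
    rw [Metric.isBounded_iff_subset_closedBall 0]
    refine ⟨‖x‖ + (d + 1), fun p hp => ?_⟩
    simp only [Metric.mem_closedBall, dist_zero_right]
    have h1 : dist x (p : X) ≤ d + 1 := hp
    have h2 : ‖(p : X)‖ ≤ ‖x‖ + dist x (p:X) := by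
      rw [dist_eq_norm]
      calc ‖(p:X)‖ = ‖x - (x - (p:X))‖ := by rw [sub_sub_cancel]
        _ ≤ ‖x‖ + ‖x - (p:X)‖ := norm_sub_le _ _
    calc ‖p‖ = ‖(p : X)‖ := rfl
      _ ≤ ‖x‖ + (d + 1) := by linarith
  have hKc : IsCompact K := Metric.isCompact_of_isClosed_isBounded hKcl hKbd
  have hK'c : IsCompact (Subtype.val '' K : Set X) := hKc.image continuous_subtype_val
  have hK'ne : (Subtype.val '' K : Set X).Nonempty := hKne.image _
  obtain ⟨y, hyK, hy⟩ := hK'c.exists_infDist_eq_dist hK'ne x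
  obtain ⟨p, hpK, rfl⟩ := hyK
  have hyP : (p : X) ∈ P := p.2
  refine ⟨p, hyP, le_antisymm ?_ (infDist_le_dist_of_mem hyP)⟩
  -- dist x p ≤ d : show dist x p ≤ dist x m for all m ∈ P
  have hxp : dist x (p : X) = Metric.infDist x (Subtype.val '' K : Set X) := hy.symm
  have hlow : ∀ m ∈ (P : Set X), dist x (p:X) ≤ dist x m := by
    intro m hm
    by_cases hcase : dist x m ≤ d + 1
    · have : m ∈ (Subtype.val '' K : Set X) := ⟨⟨m, hm⟩, hcase, rfl⟩
      rw [hxp]; exact infDist_le_dist_of_mem this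
    · have hz' : (z : X) ∈ (Subtype.val '' K : Set X) := ⟨⟨z, hzP⟩, hz.le, rfl⟩
      have : dist x (p:X) ≤ dist x z := by rw [hxp]; exact infDist_le_dist_of_mem hz'
      linarith
  by_contra hcon
  push_neg at hcon
  obtain ⟨m, hmP, hmd⟩ := (infDist_lt_iff hne).mp hcon
  exact absurd (hlow m hmP) (by linarith)

lemma nat_four_le (n : ℕ) (hn : 1 ≤ n) : 4 * (n:ℝ) ≤ 2^n * ((n:ℝ)+1) := by
  induction n with
  | zero => norm_num at hn
  | succ m ih =>
    rcases Nat.eq_zero_or_pos m with rfl | hm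
    · norm_num
    · have ihm := ih hm
      have h2m : (1:ℝ) ≤ 2^m := one_le_pow₀ (by norm_num)
      have hm1 : (1:ℝ) ≤ (m:ℝ) := by exact_mod_cast hm
      push_cast
      push_cast at ihm
      rw [pow_succ (2:ℝ) m]
      nlinarith

lemma nat_sq_le (n : ℕ) (hn : 1 ≤ n) : 2 * (n:ℝ)^2 ≤ (2^n - 1) * ((n:ℝ)+1) := by
  induction n with
  | zero => norm_num at hn
  | succ m ih =>
    rcases Nat.eq_zero_or_pos m with rfl | hm
    · norm_num
    · have h2m : ((m:ℝ)+1) ≤ 2^m := by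
        have := Nat.lt_two_pow_self (n := m)
        have : ((m:ℝ)+1) ≤ (2:ℝ)^m := by exact_mod_cast Nat.lt_two_pow_self (n := m)
        exact this
      have hm1 : (1:ℝ) ≤ (m:ℝ) := by exact_mod_cast hm
      push_cast
      rw [pow_succ (2:ℝ) m]
      nlinarith [ih hm, mul_le_mul_of_nonneg_right h2m (show (0:ℝ) ≤ (m:ℝ)+2 by linarith)]

lemma pow_sub_pow_le {a b : ℝ} (hb : 0 ≤ b) (hba : b ≤ a) (ha : a ≤ 1) (n : ℕ) :
    a^n - b^n ≤ n * (a - b) := by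
  induction n with
  | zero => simp
  | succ m ih =>
    have hpow : b^m ≤ a^m := pow_le_pow_left₀ hb hba m
    have hbm : (0:ℝ) ≤ b^m := pow_nonneg hb m
    have ham : a^m ≤ 1 := pow_le_one₀ (le_trans hb hba) ha
    push_cast
    rw [pow_succ, pow_succ]
    nlinarith

lemma g_mono (n : ℕ) {a b : ℝ} (ha : 0 ≤ a) (hab : a ≤ b) (hb : b < 1) :
    2^(n-1) * n * a / (1-a)^n ≤ 2^(n-1) * n * b / (1-b)^n := by
  have h1a : (0:ℝ) < 1 - a := by linarith
  have h1b : (0:ℝ) < 1 - b := by linarith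
  have hb0 : 0 ≤ b := ha.trans hab
  apply div_le_div₀ (mul_nonneg (mul_nonneg (by positivity) (Nat.cast_nonneg n)) hb0)
    (mul_le_mul_of_nonneg_left hab (by positivity)) (pow_pos h1b n)
  exact pow_le_pow_left₀ h1b.le (by linarith) n

/-- The key arithmetic estimate for the induction step. -/
lemma key_arith (n : ℕ) (hn : 1 ≤ n) {δ : ℝ} (h0 : 0 ≤ δ) (h1 : δ < 1)
    (hC : 2^n * ((n:ℝ)+1) * δ < (1-δ)^(n+1)) :
    (2^(n-1) * n * (2*δ) / (1-2*δ)^n + δ) / (1-δ) ≤ 2^n * ((n:ℝ)+1) * δ / (1-δ)^(n+1) := by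
  have h1δ : (0:ℝ) < 1 - δ := by linarith
  have hpow1 : (1-δ)^(n+1) ≤ 1 := pow_le_one₀ h1δ.le (by linarith)
  have hCle : 2^n * ((n:ℝ)+1) * δ ≤ 1 := le_trans hC.le hpow1
  have h4n : 4 * (n:ℝ) * δ ≤ 1 := by
    have := nat_four_le n hn
    nlinarith
  have hn1 : (1:ℝ) ≤ (n:ℝ) := by exact_mod_cast hn
  have hδ4 : δ ≤ 1/4 := by nlinarith
  have hQ : (0:ℝ) < 1 - 2*δ := by linarith
  have hQn : (1:ℝ)/2 ≤ (1-2*δ)^n := by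
    have hber := one_add_mul_le_pow (show (-2:ℝ) ≤ -(2*δ) by linarith) n
    rw [show (1 + -(2*δ)) = 1 - 2*δ by ring] at hber
    nlinarith
  have hQn1 : (1-2*δ)^n ≤ 1 := pow_le_one₀ hQ.le (by linarith)
  have hPn : (0:ℝ) < (1-δ)^n := pow_pos h1δ n
  have hPn1 : (1-δ)^n ≤ 1 := pow_le_one₀ h1δ.le (by linarith)
  have hPQ : (1-2*δ)^n ≤ (1-δ)^n := pow_le_pow_left₀ hQ.le (by linarith) n
  have hsub : (1-δ)^n - (1-2*δ)^n ≤ n * δ := by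
    have := pow_sub_pow_le (a := 1-δ) (b := 1-2*δ) hQ.le (by linarith) (by linarith) n
    calc (1-δ)^n - (1-2*δ)^n ≤ n * ((1-δ) - (1-2*δ)) := this
      _ = n * δ := by ring
  have h2n : (1:ℝ) ≤ 2^n := one_le_pow₀ (by norm_num)
  -- G1 : 2^n n² δ ≤ (2^n - 1)/2
  have hG1 : 2^n * (n:ℝ)^2 * δ ≤ (2^n - 1)/2 := by
    have hsq := nat_sq_le n hn
    -- 2(n+1) * (2^n n² δ) = 2n² * (2^n (n+1) δ) ≤ 2n² ≤ (2^n -1)(n+1)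
    have e1 : 2^n * (n:ℝ)^2 * δ * (2*((n:ℝ)+1)) = 2*(n:ℝ)^2 * (2^n * ((n:ℝ)+1) * δ) := by ring
    nlinarith [mul_nonneg (mul_nonneg (pow_nonneg (show (0:ℝ) ≤ 2 by norm_num) n)
      (sq_nonneg (n:ℝ))) h0]
  -- key2 : 2^n n / Q^n + 1 ≤ 2^n (n+1) / P^n  (multiplied through by P^n Q^n)
  have hkey2 : 2^n * (n:ℝ) * (1-δ)^n + (1-δ)^n * (1-2*δ)^n ≤ 2^n * ((n:ℝ)+1) * (1-2*δ)^n := by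
    have t1 : 2^n * (n:ℝ) * ((1-δ)^n - (1-2*δ)^n) ≤ 2^n * (n:ℝ) * ((n:ℝ)*δ) := by
      apply mul_le_mul_of_nonneg_left hsub (by positivity)
    have t2 : (1:ℝ)/2 * (2^n - 1) ≤ (1-2*δ)^n * (2^n - (1-δ)^n) := by
      apply mul_le_mul hQn (by linarith) (by linarith) (by positivity)
    nlinarith
  -- now divide: goal
  rw [div_le_div_iff₀ h1δ (pow_pos h1δ (n+1))]
  have hexp : (2:ℝ)^(n-1) * n * (2*δ) = 2^n * n * δ := by
    have : n - 1 + 1 = n := Nat.succ_pred_eq_of_pos hn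
    calc (2:ℝ)^(n-1) * n * (2*δ) = (2^(n-1) * 2) * n * δ := by ring
      _ = 2^n * n * δ := by rw [← pow_succ, this]
  rw [hexp]
  have hPn1' : (1-δ)^(n+1) = (1-δ)^n * (1-δ) := pow_succ _ _
  rw [hPn1']
  -- goal: (2^n n δ/(1-2δ)^n + δ) * ((1-δ)^n (1-δ)) ≤ 2^n (n+1) δ * (1-δ)
  rw [div_add' _ _ _ (by positivity), div_mul_eq_mul_div, div_le_iff₀ (by positivity)]
  -- (2^n n δ + δ (1-2δ)^n) * ((1-δ)^n (1-δ)) ≤ (2^n (n+1) δ (1-δ)) * (1-2δ)^n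
  nlinarith [mul_le_mul_of_nonneg_right hkey2 h0,
    mul_nonneg (mul_nonneg h0 hPn.le) hQ.le, mul_pos hPn (mul_pos h1δ (pow_pos hQ n)),
    mul_le_mul_of_nonneg_right (mul_le_mul_of_nonneg_right hkey2 h0) h1δ.le]



universe u


lemma main : ∀ (n : ℕ) {X : Type u} [NormedAddCommGroup X] [NormedSpace ℂ X]
    (M N : Submodule ℂ X), ∀ [FiniteDimensional ℂ M] [FiniteDimensional ℂ N],
    finrank ℂ M = n → finrank ℂ N = n → gapDelta N M < 1 →
    gapDelta M N ≤ 2^(n-1) * n * gapDelta N M / (1 - gapDelta N M)^n := by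
  intro n
  induction n with
  | zero =>
    intro X _ _ M N _ _ hM _ _
    rw [gapDelta_of_finrank_zero N hM]
    norm_num
  | succ n IH =>
    intro X _ _ M N _ _ hM hN h
    simp only [Nat.add_sub_cancel, Nat.cast_add, Nat.cast_one]
    set δ := gapDelta N M with hδdef
    have hδ0 : 0 ≤ δ := gapDelta_nonneg N M
    have hδ1 : δ < 1 := h
    by_cases hA : (1:ℝ) ≤ 2^n * ((n:ℝ)+1) * δ / (1-δ)^(n+1)
    · exact le_trans (gapDelta_le_one M N) hA
    push_neg at hA
    have h1δ : (0:ℝ) < 1 - δ := by linarith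
    have hCon : 2^n * ((n:ℝ)+1) * δ < (1-δ)^(n+1) := by
      rw [div_lt_one (pow_pos h1δ (n+1))] at hA
      exact hA
    have hδhalf : δ < 1/2 := by
      have e1 : (1-δ)^(n+1) ≤ (1-δ)^1 := pow_le_pow_of_le_one h1δ.le (by linarith)
        (by omega)
      rw [pow_one] at e1
      have hn0 : (0:ℝ) ≤ (n:ℝ) := Nat.cast_nonneg n
      have h2n : (1:ℝ) ≤ 2^n := one_le_pow₀ (by norm_num)
      have hfac : (1:ℝ) ≤ 2^n*((n:ℝ)+1) := by nlinarith
      have h3 : δ ≤ 2^n*((n:ℝ)+1)*δ := by nlinarith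
      linarith
    -- pick a unit vector v in N
    have hNbot : N ≠ ⊥ := by
      intro hbot
      rw [hbot, finrank_bot] at hN
      omega
    obtain ⟨y, hyN, hy0⟩ := Submodule.exists_mem_ne_zero_of_ne_bot hNbot
    have hny : (0:ℝ) < ‖y‖ := norm_pos_iff.mpr hy0
    set v : X := (‖y‖ : ℂ)⁻¹ • y with hvdef
    have hvN : v ∈ N := N.smul_mem _ hyN
    have hv1 : ‖v‖ = 1 := by
      rw [hvdef, norm_smul, norm_inv, Complex.norm_real, Real.norm_eq_abs, abs_of_pos hny,
        inv_mul_cancel₀ hny.ne']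
    -- best approximation u' ∈ M of v
    obtain ⟨u', hu'M, hu'd⟩ := exists_dist_eq_infDist M v
    have hvu' : ‖v - u'‖ ≤ δ := by
      rw [← dist_eq_norm, hu'd]
      exact le_gapDelta hvN hv1
    have hu'n : 1 - δ ≤ ‖u'‖ := by
      have h2 : ‖v‖ - ‖u'‖ ≤ ‖v - u'‖ := norm_sub_norm_le v u'
      rw [hv1] at h2
      linarith
    have hu'0 : u' ≠ 0 := by
      intro h0
      rw [h0, norm_zero] at hu'n
      linarith
    have hnu' : (0:ℝ) < ‖u'‖ := norm_pos_iff.mpr hu'0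
    have hcu0 : ((‖u'‖:ℝ) : ℂ) ≠ 0 := Complex.ofReal_ne_zero.mpr hnu'.ne'
    set u : X := (‖u'‖ : ℂ)⁻¹ • u' with hudef
    have huM : u ∈ M := M.smul_mem _ hu'M
    have hu1 : ‖u‖ = 1 := by
      rw [hudef, norm_smul, norm_inv, Complex.norm_real, Real.norm_eq_abs, abs_of_pos hnu',
        inv_mul_cancel₀ hnu'.ne']
    have hu0 : u ≠ 0 := by
      intro h0
      rw [h0, norm_zero] at hu1
      norm_num at hu1
    have hu'u : u' = (‖u'‖ : ℂ) • u := by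
      rw [hudef, smul_smul, mul_inv_cancel₀ hcu0, one_smul]
    have huu' : ‖u - u'‖ ≤ δ := by
      have e : u - u' = ((1 : ℂ) - (‖u'‖:ℂ)) • u := by
        rw [sub_smul, one_smul]
        rw [← hu'u]
      calc ‖u - u'‖ = ‖(1 : ℂ) - (‖u'‖:ℂ)‖ * ‖u‖ := by rw [e, norm_smul]
        _ = |1 - ‖u'‖| := by
            rw [hu1, mul_one, show (1 : ℂ) - (‖u'‖:ℂ) = (((1 - ‖u'‖ : ℝ)) : ℂ) by push_cast; ring,
              Complex.norm_real, Real.norm_eq_abs]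
        _ = |‖v‖ - ‖u'‖| := by rw [hv1]
        _ ≤ ‖v - u'‖ := abs_norm_sub_norm_le v u'
        _ ≤ δ := hvu'
    have huv : ‖u - v‖ ≤ 2*δ := by
      calc ‖u - v‖ = ‖(u - u') + (u' - v)‖ := by abel_nf
        _ ≤ ‖u - u'‖ + ‖u' - v‖ := norm_add_le _ _
        _ ≤ δ + δ := add_le_add huu' (by rw [norm_sub_rev]; exact hvu')
        _ = 2*δ := by ring
    -- the dual peak functional at u
    obtain ⟨f, hf1, hfu⟩ := exists_dual_vector ℂ u (norm_ne_zero_iff.mpr hu0)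
    have hfu1 : f u = 1 := by rw [hfu, hu1]; norm_num
    have hfb : ∀ z : X, ‖f z‖ ≤ ‖z‖ := fun z => by
      have := f.le_opNorm z
      rwa [hf1, one_mul] at this
    -- the one-dimensional subspace S = span u
    set S : Submodule ℂ X := (ℂ ∙ u) with hSdef
    haveI hSfin : FiniteDimensional ℂ S := by infer_instance
    haveI hScl : IsClosed (S : Set X) := S.closed_of_finiteDimensional
    have hSM : S ≤ M := by
      rw [hSdef, Submodule.span_le, Set.singleton_subset_iff]
      exact huM
    -- key quotient-norm lower bound
    have hker2 : ∀ w : X, f w = 0 → ‖w‖ ≤ 2 * ‖S.mkQ w‖ := by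
      intro w hw
      refine le_of_forall_pos_le_add fun ε hε => ?_
      obtain ⟨m, hmk, hm⟩ := Submodule.Quotient.norm_mk_lt (S.mkQ w) (half_pos hε)
      have hwm : w - m ∈ S := by
        have h1 : m - w ∈ S := by
          rw [← Submodule.Quotient.eq]
          rw [Submodule.mkQ_apply] at hmk
          exact hmk
        simpa using S.neg_mem h1
      obtain ⟨t, ht⟩ := Submodule.mem_span_singleton.mp hwm
      have hmeq : m = w - t • u := by
        rw [eq_sub_iff_add_eq, ht]
        abel
      have h1 : ‖t‖ ≤ ‖m‖ := by
        have hfm : f m = -t := by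
          rw [hmeq, map_sub, map_smul, hw, hfu1, smul_eq_mul, mul_one, zero_sub]
        calc ‖t‖ = ‖f m‖ := by rw [hfm, norm_neg]
          _ ≤ ‖m‖ := hfb m
      have h2 : ‖w‖ - ‖t‖ ≤ ‖m‖ := by
        have : ‖w‖ ≤ ‖m‖ + ‖t • u‖ := by
          calc ‖w‖ = ‖m + t • u‖ := by rw [hmeq, sub_add_cancel]
            _ ≤ ‖m‖ + ‖t • u‖ := norm_add_le _ _
        rw [norm_smul, hu1, mul_one] at this
        linarith
      have hmlt : ‖m‖ < ‖S.mkQ w‖ + ε/2 := by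
        rw [Submodule.mkQ_apply]
        exact hm
      linarith
    -- the hyperplane N₀ of N
    set N₀ : Submodule ℂ X := N ⊓ LinearMap.ker (f : X →ₗ[ℂ] ℂ) with hN₀def
    have hN₀N : N₀ ≤ N := inf_le_left
    haveI hN₀fin : FiniteDimensional ℂ N₀ := Submodule.finiteDimensional_of_le hN₀N
    -- quotient subspaces
    set Mq : Submodule ℂ (X ⧸ S) := M.map S.mkQ with hMqdef
    set Nq : Submodule ℂ (X ⧸ S) := N₀.map S.mkQ with hNqdef
    haveI : FiniteDimensional ℂ Mq := by infer_instance
    haveI : FiniteDimensional ℂ Nq := by infer_instance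
    -- dimension of Mq
    have hfrS : finrank ℂ S = 1 := finrank_span_singleton hu0
    have hMq : finrank ℂ Mq = n := by
      set φ : M →ₗ[ℂ] (X ⧸ S) := S.mkQ.comp M.subtype with hφdef
      have hφrange : LinearMap.range φ = Mq := by
        rw [hφdef, LinearMap.range_comp, Submodule.range_subtype]
      have hφker : LinearMap.ker φ = Submodule.comap M.subtype S := by
        rw [hφdef, LinearMap.ker_comp, Submodule.ker_mkQ]
      have hkerS : finrank ℂ (LinearMap.ker φ) = 1 := by
        rw [hφker, LinearEquiv.finrank_eq (Submodule.comapSubtypeEquivOfLe hSM)]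
        exact hfrS
      have hrn := LinearMap.finrank_range_add_finrank_ker φ
      rw [hφrange, hkerS, hM] at hrn
      omega
    -- f is nonzero on N
    have hfv : ‖f v - 1‖ ≤ 2*δ := by
      have e : f v - 1 = f (v - u) := by rw [map_sub, hfu1]
      rw [e]
      calc ‖f (v - u)‖ ≤ ‖v - u‖ := hfb _
        _ = ‖u - v‖ := by rw [norm_sub_rev]
        _ ≤ 2*δ := huv
    have hfv0 : f v ≠ 0 := by
      intro h0
      rw [h0, zero_sub, norm_neg, norm_one] at hfv
      linarith
    -- dimension of N₀
    have hN₀n : finrank ℂ N₀ = n := by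
      set ψ : N →ₗ[ℂ] ℂ := (f : X →ₗ[ℂ] ℂ).comp N.subtype with hψdef
      have hψv : ψ ⟨v, hvN⟩ = f v := rfl
      have hψrange : LinearMap.range ψ = ⊤ := by
        rw [eq_top_iff]
        intro z _
        have hmem : f v ∈ LinearMap.range ψ := ⟨⟨v, hvN⟩, hψv⟩
        have hz : z = (z * (f v)⁻¹) • (f v) := by
          rw [smul_eq_mul]
          field_simp
        rw [hz]
        exact Submodule.smul_mem _ _ hmem
      have hrn2 := LinearMap.finrank_range_add_finrank_ker ψ
      rw [hψrange, finrank_top, finrank_self, hN] at hrn2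
      have hψker : finrank ℂ (LinearMap.ker ψ) = n := by omega
      have he : Submodule.comap N.subtype N₀ = LinearMap.ker ψ := by
        rw [hN₀def, Submodule.comap_inf, Submodule.comap_subtype_self, top_inf_eq, hψdef,
          LinearMap.ker_comp]
      rw [← LinearEquiv.finrank_eq (Submodule.comapSubtypeEquivOfLe hN₀N), he, hψker]
    -- dimension of Nq
    have hNq : finrank ℂ Nq = n := by
      set χ : N₀ →ₗ[ℂ] (X ⧸ S) := S.mkQ.comp N₀.subtype with hχdef
      have hχinj : Function.Injective χ := by
        rw [← LinearMap.ker_eq_bot, eq_bot_iff]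
        intro w hw
        have hw0 : S.mkQ (w : X) = 0 := hw
        have hfw : f (w : X) = 0 := by
          have hmem2 : (w:X) ∈ N ⊓ LinearMap.ker (f : X →ₗ[ℂ] ℂ) := w.2
          exact LinearMap.mem_ker.mp (Submodule.mem_inf.mp hmem2).2
        have hle := hker2 (w : X) hfw
        rw [hw0, norm_zero, mul_zero] at hle
        have : (w : X) = 0 := norm_le_zero_iff.mp hle
        exact Submodule.mem_bot ℂ |>.mpr (Subtype.ext this)
      have hrk := LinearMap.finrank_range_of_inj hχinj
      have hχrange : LinearMap.range χ = Nq := by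
        rw [hχdef, LinearMap.range_comp, Submodule.range_subtype]
      rw [hχrange, hN₀n] at hrk
      exact hrk
    -- gap bound in the quotient
    have hgapq : gapDelta Nq Mq ≤ 2*δ := by
      apply gapDelta_le (by positivity)
      intro z hzNq hz1
      rw [hNqdef, Submodule.mem_map] at hzNq
      obtain ⟨w, hwN₀, rfl⟩ := hzNq
      rw [hN₀def] at hwN₀
      have hwN : w ∈ N := (Submodule.mem_inf.mp hwN₀).1
      have hwf : f w = 0 := LinearMap.mem_ker.mp (Submodule.mem_inf.mp hwN₀).2
      have hwnorm : ‖w‖ ≤ 2 := by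
        have := hker2 w hwf
        rw [hz1] at this
        linarith
      have hq : Metric.infDist (S.mkQ w) (Mq : Set (X ⧸ S)) ≤ Metric.infDist w (M : Set X) := by
        refine le_of_forall_pos_le_add fun ε hε => ?_
        obtain ⟨m, hmM, hm⟩ := (infDist_lt_iff ⟨0, M.zero_mem⟩).mp
          (show Metric.infDist w (M : Set X) < Metric.infDist w (M : Set X) + ε from
            lt_add_of_pos_right _ hε)
        have hmem : S.mkQ m ∈ (Mq : Set (X ⧸ S)) := Submodule.mem_map_of_mem hmM
        calc Metric.infDist (S.mkQ w) (Mq : Set (X ⧸ S)) ≤ dist (S.mkQ w) (S.mkQ m) :=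
              infDist_le_dist_of_mem hmem
          _ ≤ dist w m := by
              rw [dist_eq_norm, dist_eq_norm, ← map_sub, Submodule.mkQ_apply]
              exact Submodule.Quotient.norm_mk_le S _
          _ ≤ Metric.infDist w (M : Set X) + ε := hm.le
      have hwd := infDist_le_gapDelta_mul (M := N) (N := M) hwN
      calc Metric.infDist (S.mkQ w) (Mq : Set (X ⧸ S)) ≤ Metric.infDist w (M : Set X) := hq
        _ ≤ δ * ‖w‖ := by rw [hδdef]; exact hwd
        _ ≤ 2*δ := by nlinarith
    -- β
    set β := gapDelta Mq Nq with hβdef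
    have hβ0 : 0 ≤ β := gapDelta_nonneg _ _
    have hq1 : gapDelta Nq Mq < 1 := lt_of_le_of_lt hgapq (by linarith)
    -- the lifting step: gapDelta M N ≤ (β + δ)/(1 - δ)
    have hstep : gapDelta M N ≤ (β + δ)/(1-δ) := by
      apply gapDelta_le (by positivity)
      intro x hxM hx1
      refine le_of_forall_pos_le_add fun ε hε => ?_
      set ε₁ := ε * (1-δ)/2 with hε₁def
      have hε₁ : 0 < ε₁ := by positivity
      have h1 : Metric.infDist (S.mkQ x) (Nq : Set (X ⧸ S)) ≤ β := by
        have h2 := infDist_le_gapDelta_mul (M := Mq) (N := Nq) (Submodule.mem_map_of_mem hxM)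
        have h3 : ‖S.mkQ x‖ ≤ 1 := by
          rw [← hx1, Submodule.mkQ_apply]
          exact Submodule.Quotient.norm_mk_le S x
        rw [← hβdef] at h2
        nlinarith
      have hNqne : (Nq : Set (X ⧸ S)).Nonempty := ⟨0, Nq.zero_mem⟩
      obtain ⟨z, hzNq, hzd⟩ := (infDist_lt_iff hNqne).mp
        (show Metric.infDist (S.mkQ x) (Nq : Set (X ⧸ S)) < β + ε₁/2 by linarith)
      have hzNq' : z ∈ Nq := hzNq
      rw [Submodule.mem_map] at hzNq'
      obtain ⟨w, hwN₀, rfl⟩ := hzNq'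
      rw [hN₀def] at hwN₀
      have hwN : w ∈ N := (Submodule.mem_inf.mp hwN₀).1
      have hwf : f w = 0 := LinearMap.mem_ker.mp (Submodule.mem_inf.mp hwN₀).2
      have hxw : ‖S.mkQ (x - w)‖ < β + ε₁/2 := by
        rw [map_sub, ← dist_eq_norm]
        exact hzd
      obtain ⟨m, hmk, hm⟩ := Submodule.Quotient.norm_mk_lt (S.mkQ (x-w))
        (show (0:ℝ) < ε₁/2 by positivity)
      have hmem : (x - w) - m ∈ S := by
        have h1' : m - (x - w) ∈ S := by
          rw [← Submodule.Quotient.eq]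
          rw [Submodule.mkQ_apply] at hmk
          exact hmk
        simpa using S.neg_mem h1'
      obtain ⟨t, ht⟩ := Submodule.mem_span_singleton.mp hmem
      have hmeq : m = x - w - t • u := by
        rw [eq_sub_iff_add_eq, ht]
        abel
      have hmlt : ‖x - w - t•u‖ < β + ε₁ := by
        rw [← hmeq]
        have : ‖S.mkQ (x - w)‖ + ε₁/2 < β + ε₁ := by linarith
        calc ‖m‖ < ‖S.mkQ (x-w)‖ + ε₁/2 := hm
          _ < β + ε₁ := this
      have hfx : ‖f x‖ ≤ 1 := by
        rw [← hx1]
        exact hfb x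
      have htb : ‖t‖ ≤ 1 + β + ε₁ := by
        have e : f (x - w - t•u) = f x - t := by
          rw [map_sub, map_sub, map_smul, hwf, hfu1, smul_eq_mul, mul_one, sub_zero]
        have hb := hfb (x - w - t•u)
        rw [e] at hb
        calc ‖t‖ = ‖f x - (f x - t)‖ := by rw [sub_sub_cancel]
          _ ≤ ‖f x‖ + ‖f x - t‖ := norm_sub_le _ _
          _ ≤ 1 + (β + ε₁) := add_le_add hfx (le_trans hb hmlt.le)
          _ = 1 + β + ε₁ := by ring
      set q : X := w + t • ((‖u'‖:ℂ)⁻¹ • v) with hqdef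
      have hqN : q ∈ N := N.add_mem hwN (N.smul_mem _ (N.smul_mem _ hvN))
      have hdiff : ‖t • u - t • ((‖u'‖:ℂ)⁻¹ • v)‖ ≤ ‖t‖ * (δ/(1-δ)) := by
        rw [← smul_sub, norm_smul]
        apply mul_le_mul_of_nonneg_left _ (norm_nonneg t)
        have e : u - (‖u'‖:ℂ)⁻¹ • v = (‖u'‖:ℂ)⁻¹ • (u' - v) := by
          rw [smul_sub, ← hudef]
        rw [e, norm_smul, norm_inv, Complex.norm_real, Real.norm_eq_abs, abs_of_pos hnu',
          inv_mul_eq_div, norm_sub_rev]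
        exact div_le_div₀ hδ0 hvu' h1δ hu'n
      have hxq : dist x q ≤ (β + ε₁) + (1 + β + ε₁) * (δ/(1-δ)) := by
        have e : x - q = (x - w - t•u) + (t • u - t • ((‖u'‖:ℂ)⁻¹ • v)) := by
          rw [hqdef]
          abel
        rw [dist_eq_norm, e]
        calc ‖(x - w - t•u) + (t • u - t • ((‖u'‖:ℂ)⁻¹ • v))‖
            ≤ ‖x - w - t•u‖ + ‖t • u - t • ((‖u'‖:ℂ)⁻¹ • v)‖ := norm_add_le _ _
          _ ≤ (β + ε₁) + ‖t‖ * (δ/(1-δ)) := add_le_add hmlt.le hdiff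
          _ ≤ (β + ε₁) + (1 + β + ε₁) * (δ/(1-δ)) := by
              have hd : 0 ≤ δ/(1-δ) := by positivity
              have := mul_le_mul_of_nonneg_right htb hd
              linarith
      have heq : (β + ε₁) + (1 + β + ε₁) * (δ/(1-δ)) = (β + δ + ε₁)/(1-δ) := by
        field_simp
        ring
      have hfin : (β + δ + ε₁)/(1-δ) = (β + δ)/(1-δ) + ε/2 := by
        rw [hε₁def, add_div]
        congr 1
        rw [eq_div_iff (two_ne_zero), div_mul_eq_mul_div, div_eq_iff h1δ.ne']
        ring
      calc Metric.infDist x (N : Set X) ≤ dist x q := infDist_le_dist_of_mem hqN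
        _ ≤ (β + ε₁) + (1 + β + ε₁) * (δ/(1-δ)) := hxq
        _ = (β + δ)/(1-δ) + ε/2 := by rw [heq, hfin]
        _ ≤ (β + δ)/(1-δ) + ε := by linarith
    -- conclude
    rcases Nat.eq_zero_or_pos n with rfl | hn1
    · have hβz : β = 0 := gapDelta_of_finrank_zero Nq hMq
      rw [hβz, zero_add] at hstep
      calc gapDelta M N ≤ δ/(1-δ) := hstep
        _ ≤ _ := by
            rw [pow_zero, pow_one]
            norm_num
    · have hIH := IH Mq Nq hMq hNq hq1
      rw [← hβdef] at hIH
      have h2δ : 2*δ < 1 := by linarith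
      have hβle : β ≤ 2^(n-1)*n*(2*δ)/(1-2*δ)^n :=
        le_trans hIH (g_mono n (gapDelta_nonneg _ _) hgapq h2δ)
      calc gapDelta M N ≤ (β + δ)/(1-δ) := hstep
        _ ≤ (2^(n-1)*n*(2*δ)/(1-2*δ)^n + δ)/(1-δ) := by gcongr
        _ ≤ 2^n*((n:ℝ)+1)*δ/(1-δ)^(n+1) := key_arith n hn1 hδ0 hδ1 hCon


end GapAux


/-- For subspaces `M`, `N` of a Banach space with
`dim M = dim N = n` and `δ(N,M) < 1`, one has
`δ(M,N) ≤ 2^{n-1} n δ(N,M) / (1 − δ(N,M))^n`. -/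
theorem gapDelta_le_of_eq_finrank {X : Type*}
    [NormedAddCommGroup X] [NormedSpace ℂ X] [CompleteSpace X]
    (M N : Submodule ℂ X) (n : ℕ)
    [FiniteDimensional ℂ ↥M] [FiniteDimensional ℂ ↥N]
    (hM : Module.finrank ℂ ↥M = n) (hN : Module.finrank ℂ ↥N = n)
    (h : gapDelta N M < 1) :
    gapDelta M N ≤ 2 ^ (n - 1) * n * gapDelta N M / (1 - gapDelta N M) ^ n := by
  exact GapAux.main n M N hM hN h
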